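/- Strictness of the closeness ordering (antisymmetry in Theorem 4.3): Let x, y, z : ℕ → V be sequences. If for every m ∈ ℕ the set {n : d(y(n), x(n)) + m ≤ d(z(n), x(n))} belongs to ℱ (the galaxy of y is closer to Γ₀ than is the galaxy of z), then y and z are not limitedly distant; in particular y and z lie in distinct galaxies, and the galaxy of z is not closer to Γ₀ than is the galaxy of y. -/
import Mathlib


/-- Strictness / antisymmetry of the closeness ordering: if the galaxy of `y`
is closer to the principal galaxy than is the galaxy of `z` (witnessed by a
sequence `x`), then `y` and `z` are not limitedly distant (so they lie in
distinct galaxies), and the galaxy of `z` is not closer to the principal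
galaxy than is the galaxy of `y`. -/
theorem closer_strict {V : Type*} [Infinite V]
    (G : SimpleGraph V) (hG : G.Connected)
    (ℱ : Ultrafilter ℕ) (hF : ∀ a : ℕ, ℱ ≠ pure a)
    (x y z : ℕ → V)
    (hyz : ∀ m : ℕ,
      {n : ℕ | G.dist (y n) (x n) + m ≤ G.dist (z n) (x n)} ∈ ℱ) :
    (¬ ∃ k : ℕ, {n : ℕ | G.dist (y n) (z n) ≤ k} ∈ ℱ) ∧
    ¬ (∀ m : ℕ,
      {n : ℕ | G.dist (z n) (x n) + m ≤ G.dist (y n) (x n)} ∈ ℱ) := by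
  constructor
  · rintro ⟨k, hk⟩
    have h := (ℱ.toFilter.inter_sets hk (hyz (k + 1)))
    rcases Filter.nonempty_of_mem h with ⟨n, hn1, hn2⟩
    simp only [Set.mem_setOf_eq] at hn1 hn2
    have htri : G.dist (z n) (x n) ≤ G.dist (z n) (y n) + G.dist (y n) (x n) :=
      hG.dist_triangle
    have hsymm : G.dist (z n) (y n) = G.dist (y n) (z n) := SimpleGraph.dist_comm ..
    omega
  · intro hzy
    have h := (ℱ.toFilter.inter_sets (hzy 1) (hyz 1))
    rcases Filter.nonempty_of_mem h with ⟨n, hn1, hn2⟩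
    simp only [Set.mem_setOf_eq] at hn1 hn2
    omega
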